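/- The F_q-algebra F_q[V_1, …, V_h]/(μ(V_1, …, V_h)^{q−1} − 1) is a smooth F_q-algebra; equivalently, the ideal of F_q[V_1, …, V_h] generated by μ(V_1, …, V_h)^{q−1} − 1 together with its h partial derivatives ∂(μ^{q−1})/∂V_i (1 ≤ i ≤ h) is the unit ideal, so the affine hypersurface μ(V_1, …, V_h)^{q−1} = 1 (the reduction of the Lubin–Tate space at level π, a Deligne–Lusztig variety for GL_h(F_q)) is smooth. -/

import Mathlib

open Finset

noncomputable section

/-- The Moore determinant `μ(V₁, …, V_h) = det (Vᵢ^{q^{j-1}})` of the variables of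
`F_q[V₁, …, V_h]`. -/
def mooreV (q h : ℕ) (K : Type*) [Field K] : MvPolynomial (Fin h) K :=
  Matrix.det (Matrix.of fun i j : Fin h => MvPolynomial.X i ^ q ^ (j : ℕ))

/-- The defining polynomial `μ(V₁, …, V_h)^{q−1} − 1` of the reduction of the Lubin–Tate
space at level `π` (a Deligne–Lusztig variety for `GL_h(F_q)`). -/
def dlPoly (q h : ℕ) (K : Type*) [Field K] : MvPolynomial (Fin h) K :=
  mooreV q h K ^ (q - 1) - 1

namespace DLSmoothAux

open MvPolynomial

variable {h : ℕ} {K : Type*} [Field K]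

lemma single_add_tsub {s : Fin h →₀ ℕ} {i : Fin h} (hs : s i ≠ 0) :
    Finsupp.single i 1 + (s - Finsupp.single i 1) = s := by
  ext j
  rcases eq_or_ne j i with rfl | hj
  · simp only [Finsupp.add_apply, Finsupp.tsub_apply, Finsupp.single_eq_same]
    omega
  · simp [Finsupp.single_apply, Ne.symm hj, Finsupp.tsub_apply]

lemma X_mul_pderiv_monomial (s : Fin h →₀ ℕ) (a : K) (i : Fin h) :
    X i * pderiv i (monomial s a) = (s i : MvPolynomial (Fin h) K) * monomial s a := by
  rw [pderiv_monomial]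
  rcases eq_or_ne (s i) 0 with h0 | h0
  · simp [h0]
  · rw [← pow_one (X i : MvPolynomial (Fin h) K), X_pow_eq_monomial, monomial_mul,
      single_add_tsub h0, one_mul]
    rw [show ((s i : ℕ) : MvPolynomial (Fin h) K) = C ((s i : ℕ) : K) by simp,
      C_mul_monomial, mul_comm]

lemma euler_monomial (s : Fin h →₀ ℕ) (a : K) :
    ∑ i, X i * pderiv i (monomial s a)
      = ((∑ i, s i : ℕ) : MvPolynomial (Fin h) K) * monomial s a := by
  rw [Nat.cast_sum, Finset.sum_mul]
  exact Finset.sum_congr rfl fun i _ => X_mul_pderiv_monomial s a i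

lemma prod_X_pow_eq (f : Fin h → Fin h) (e : Fin h → ℕ) (t : Finset (Fin h)) :
    (∏ i ∈ t, (X (f i) : MvPolynomial (Fin h) K) ^ e i)
      = monomial (∑ i ∈ t, Finsupp.single (f i) (e i)) 1 := by
  induction t using Finset.induction with
  | empty => simp
  | @insert a s hmem ih =>
      rw [Finset.prod_insert hmem, Finset.sum_insert hmem, ih, X_pow_eq_monomial, monomial_mul,
        one_mul]

lemma deg_sum_single (σ : Equiv.Perm (Fin h)) (q : ℕ) :
    ∑ j, (∑ i, Finsupp.single (σ i) (q ^ (i : ℕ))) j = ∑ i : Fin h, q ^ (i : ℕ) := by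
  simp only [Finsupp.finset_sum_apply, Finsupp.single_apply]
  rw [Finset.sum_comm]
  refine Finset.sum_congr rfl fun i _ => ?_
  simp

lemma euler_term (σ : Equiv.Perm (Fin h)) (q : ℕ) :
    ∑ i, X i * pderiv i (∏ j, (X (σ j) : MvPolynomial (Fin h) K) ^ q ^ (j : ℕ))
      = ((∑ j : Fin h, q ^ (j : ℕ) : ℕ) : MvPolynomial (Fin h) K)
          * ∏ j, (X (σ j) : MvPolynomial (Fin h) K) ^ q ^ (j : ℕ) := by
  rw [prod_X_pow_eq, euler_monomial, deg_sum_single]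

lemma euler_moore (q : ℕ) :
    ∑ i, X i * pderiv i (mooreV q h K)
      = ((∑ j : Fin h, q ^ (j : ℕ) : ℕ) : MvPolynomial (Fin h) K) * mooreV q h K := by
  unfold mooreV
  rw [Matrix.det_apply', Finset.mul_sum]
  simp only [map_sum, Finset.mul_sum, Matrix.of_apply]
  rw [Finset.sum_comm]
  refine Finset.sum_congr rfl fun σ _ => ?_
  have hc : ∀ i : Fin h,
      pderiv i (((Equiv.Perm.sign σ : ℤ) : MvPolynomial (Fin h) K)
          * ∏ j, X (σ j) ^ q ^ (j : ℕ))
        = ((Equiv.Perm.sign σ : ℤ) : MvPolynomial (Fin h) K)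
            * pderiv i (∏ j, X (σ j) ^ q ^ (j : ℕ)) := by
    intro i; rw [pderiv_mul]; simp
  calc ∑ i, X i * pderiv i (((Equiv.Perm.sign σ : ℤ) : MvPolynomial (Fin h) K)
          * ∏ j, X (σ j) ^ q ^ (j : ℕ))
      = ((Equiv.Perm.sign σ : ℤ) : MvPolynomial (Fin h) K)
          * ∑ i, X i * pderiv i (∏ j, X (σ j) ^ q ^ (j : ℕ)) := by
        rw [Finset.mul_sum]; refine Finset.sum_congr rfl fun i _ => ?_; rw [hc]; ring
    _ = _ := by rw [euler_term]; ring

lemma euler_dl (q : ℕ) (hq2 : 2 ≤ q) (hq0 : (q : K) = 0) (hh : 1 ≤ h) :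
    dlPoly q h K + ∑ i, X i * pderiv i (dlPoly q h K) = -1 := by
  have hd : ((∑ j : Fin h, q ^ (j : ℕ) : ℕ) : K) = 1 := by
    obtain ⟨h', rfl⟩ : ∃ h', h = h' + 1 := ⟨h - 1, by omega⟩
    push_cast
    rw [Fin.sum_univ_succ]
    simp [hq0]
  have hd' : ((∑ j : Fin h, q ^ (j : ℕ) : ℕ) : MvPolynomial (Fin h) K) = 1 := by
    rw [show ((∑ j : Fin h, q ^ (j : ℕ) : ℕ) : MvPolynomial (Fin h) K)
        = C ((∑ j : Fin h, q ^ (j : ℕ) : ℕ) : K) by simp, hd, map_one]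
  have hq1 : ((q - 1 : ℕ) : MvPolynomial (Fin h) K) = -1 := by
    rw [show ((q - 1 : ℕ) : MvPolynomial (Fin h) K) = C ((q - 1 : ℕ) : K) by simp]
    rw [Nat.cast_sub (by omega), hq0]
    simp
  have hD : ∀ i : Fin h, pderiv i (dlPoly q h K)
      = ((q - 1 : ℕ) : MvPolynomial (Fin h) K) * mooreV q h K ^ (q - 2)
          * pderiv i (mooreV q h K) := by
    intro i
    unfold dlPoly
    rw [map_sub, pderiv_one, sub_zero, pderiv_pow, show q - 1 - 1 = q - 2 from by omega]
  have step : ∑ i, X i * pderiv i (dlPoly q h K) = -(mooreV q h K ^ (q - 1)) := by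
    calc ∑ i, X i * pderiv i (dlPoly q h K)
        = ((q - 1 : ℕ) : MvPolynomial (Fin h) K) * mooreV q h K ^ (q - 2)
            * ∑ i, X i * pderiv i (mooreV q h K) := by
          rw [Finset.mul_sum]
          refine Finset.sum_congr rfl fun i _ => ?_
          rw [hD]; ring
      _ = -(mooreV q h K ^ (q - 2) * mooreV q h K) := by
          rw [euler_moore, hd', hq1]; ring
      _ = -(mooreV q h K ^ (q - 1)) := by
          rw [← pow_succ]
          congr 2
          omega
  rw [step]
  unfold dlPoly
  ring

lemma taylor_mem (c : Fin h → MvPolynomial (Fin h) K) (J : Ideal (MvPolynomial (Fin h) K))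
    (hc : ∀ i, c i ∈ J) (F : MvPolynomial (Fin h) K) :
    (aeval fun i => X i + c i) F - (F + ∑ i, c i * pderiv i F) ∈ J ^ 2 := by
  induction F using MvPolynomial.induction_on with
  | C a => simp [algebraMap_eq]
  | add F G hF hG =>
      have := Ideal.add_mem _ hF hG
      convert this using 1
      simp only [map_add, mul_add, Finset.sum_add_distrib]
      ring
  | mul_X F j hF =>
      classical
      have hDJ : (∑ i, c i * pderiv i F) ∈ J :=
        Ideal.sum_mem _ fun i _ => J.mul_mem_right _ (hc i)
      have hsum : ∑ i, c i * pderiv i (F * X j)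
          = (∑ i, c i * pderiv i F) * X j + c j * F := by
        simp only [pderiv_mul, pderiv_X, mul_add, Finset.sum_add_distrib, Finset.sum_mul]
        congr 1
        · exact Finset.sum_congr rfl fun i _ => by ring
        · rw [Finset.sum_eq_single j (fun x _ hx => by
              rw [Pi.single_eq_of_ne (Ne.symm hx)]; simp) (by simp)]
          rw [Pi.single_eq_same]
          ring
      rw [map_mul, aeval_X, hsum]
      have hring : (aeval fun i => X i + c i) F * (X j + c j)
            - (F * X j + ((∑ i, c i * pderiv i F) * X j + c j * F))
          = ((aeval fun i => X i + c i) F - (F + ∑ i, c i * pderiv i F)) * (X j + c j)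
            + (∑ i, c i * pderiv i F) * c j := by ring
      rw [hring]
      refine Ideal.add_mem _ (Ideal.mul_mem_right _ _ hF) ?_
      rw [pow_two]
      exact Ideal.mul_mem_mul hDJ (hc j)

end DLSmoothAux

/-- `F_q[V₁, …, V_h]/(μ^{q−1} − 1)` is a smooth `F_q`-algebra; equivalently, the ideal
generated by `μ^{q−1} − 1` together with its `h` partial derivatives is the unit ideal,
so the affine hypersurface `μ(V₁, …, V_h)^{q−1} = 1` is smooth. -/
theorem deligne_lusztig_hypersurface_smooth
    (p e q h : ℕ) (hp : p.Prime) (he : 1 ≤ e) (hq : q = p ^ e) (hh : 1 ≤ h)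
    (K : Type*) [Field K] [Fintype K] (hK : Fintype.card K = q) :
    Algebra.Smooth K (MvPolynomial (Fin h) K ⧸ Ideal.span {dlPoly q h K})
    ∧ Ideal.span
        ({dlPoly q h K} ∪
          Set.range fun i : Fin h => MvPolynomial.pderiv i (dlPoly q h K)) = ⊤ := by
  classical
  open MvPolynomial in
  have hq2 : 2 ≤ q := by
    have h2 := hp.two_le
    have hle : p ≤ p ^ e := Nat.le_self_pow (by omega) p
    omega
  have hq0 : (q : K) = 0 := by rw [← hK]; exact Nat.cast_card_eq_zero K
  have hkey := DLSmoothAux.euler_dl (K := K) (h := h) q hq2 hq0 hh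
  set I : Ideal (MvPolynomial (Fin h) K) := Ideal.span {dlPoly q h K} with hI
  have htop : Ideal.span ({dlPoly q h K} ∪ Set.range fun i : Fin h =>
      MvPolynomial.pderiv i (dlPoly q h K)) = ⊤ := by
    rw [Ideal.eq_top_iff_one]
    have hmem : -(dlPoly q h K)
          - ∑ i, MvPolynomial.X i * MvPolynomial.pderiv i (dlPoly q h K)
        ∈ Ideal.span ({dlPoly q h K} ∪ Set.range fun i : Fin h =>
            MvPolynomial.pderiv i (dlPoly q h K)) := by
      refine Ideal.sub_mem _ (neg_mem (Ideal.subset_span (Or.inl rfl))) ?_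
      refine Ideal.sum_mem _ fun i _ => ?_
      exact Ideal.mul_mem_left _ _ (Ideal.subset_span (Or.inr ⟨i, rfl⟩))
    have h1 : (1 : MvPolynomial (Fin h) K)
        = -(dlPoly q h K) - ∑ i, MvPolynomial.X i * MvPolynomial.pderiv i (dlPoly q h K) := by
      linear_combination hkey
    rw [h1]
    exact hmem
  refine ⟨⟨?_, ?_⟩, htop⟩
  · -- FormallySmooth
    haveI : Algebra.FormallySmooth K (MvPolynomial (Fin h) K) :=
      Algebra.FormallySmooth.of_equiv
        (MvPolynomial.renameEquiv K (Equiv.ulift.{0, 0} (α := Fin h)))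
    set f : MvPolynomial (Fin h) K →ₐ[K] MvPolynomial (Fin h) K ⧸ I :=
      Ideal.Quotient.mkₐ K I with hf
    have hker : RingHom.ker f.toRingHom = I := Ideal.mk_ker
    set c : Fin h → MvPolynomial (Fin h) K := fun i =>
      MvPolynomial.X i * dlPoly q h K with hc
    set φ : MvPolynomial (Fin h) K →ₐ[K]
        (MvPolynomial (Fin h) K ⧸ RingHom.ker f.toRingHom ^ 2) :=
      (Ideal.Quotient.mkₐ K _).comp
        (MvPolynomial.aeval fun i => MvPolynomial.X i + c i) with hφ
    have hcI : ∀ i, c i ∈ I := fun i =>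
      Ideal.mul_mem_left _ _ (Ideal.subset_span rfl)
    have hφF : φ (dlPoly q h K) = 0 := by
      rw [hφ]
      simp only [AlgHom.comp_apply, Ideal.Quotient.mkₐ_eq_mk]
      rw [Ideal.Quotient.eq_zero_iff_mem, hker]
      have ht := DLSmoothAux.taylor_mem c I hcI (dlPoly q h K)
      have hneg : dlPoly q h K + ∑ i, c i * MvPolynomial.pderiv i (dlPoly q h K)
          = -(dlPoly q h K ^ 2) := by
        have hsum2 : ∑ i, c i * MvPolynomial.pderiv i (dlPoly q h K)
            = dlPoly q h K
                * ∑ i, MvPolynomial.X i * MvPolynomial.pderiv i (dlPoly q h K) := by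
          rw [Finset.mul_sum]
          refine Finset.sum_congr rfl fun i _ => ?_
          rw [hc]; ring
        rw [hsum2]
        linear_combination dlPoly q h K * hkey
      have hsqmem : -(dlPoly q h K ^ 2) ∈ I ^ 2 := by
        rw [hI, Ideal.span_singleton_pow]
        exact neg_mem (Ideal.subset_span rfl)
      have hsplit : (MvPolynomial.aeval fun i => MvPolynomial.X i + c i) (dlPoly q h K)
          = ((MvPolynomial.aeval fun i => MvPolynomial.X i + c i) (dlPoly q h K)
              - (dlPoly q h K + ∑ i, c i * MvPolynomial.pderiv i (dlPoly q h K)))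
            + (dlPoly q h K + ∑ i, c i * MvPolynomial.pderiv i (dlPoly q h K)) := by ring
      rw [hsplit]
      exact Ideal.add_mem _ ht (hneg ▸ hsqmem)
    have hφI : ∀ x ∈ I, φ x = 0 := by
      intro x hx
      obtain ⟨r, rfl⟩ := Ideal.mem_span_singleton.mp (hI ▸ hx)
      rw [map_mul, hφF, zero_mul]
    have hlift : ∀ x, (Ideal.Quotient.liftₐ I φ hφI) (Ideal.Quotient.mk I x) = φ x := by
      intro x
      have := AlgHom.congr_fun (Ideal.Quotient.liftₐ_comp I φ hφI) x
      exact this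
    have hg : f.kerSquareLift.comp (Ideal.Quotient.liftₐ I φ hφI) = AlgHom.id K _ := by
      apply Ideal.Quotient.algHom_ext
      apply MvPolynomial.algHom_ext
      intro i
      simp only [AlgHom.comp_apply, Ideal.Quotient.mkₐ_eq_mk, AlgHom.id_apply]
      rw [hlift, hφ]
      simp only [AlgHom.comp_apply, MvPolynomial.aeval_X, Ideal.Quotient.mkₐ_eq_mk]
      have hksl : f.kerSquareLift (Ideal.Quotient.mk (RingHom.ker f.toRingHom ^ 2)
          (MvPolynomial.X i + c i)) = f (MvPolynomial.X i + c i) := rfl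
      rw [hksl, hf]
      simp only [Ideal.Quotient.mkₐ_eq_mk, map_add]
      rw [show Ideal.Quotient.mk I (c i) = 0 from
        (Ideal.Quotient.eq_zero_iff_mem).mpr (hcI i), add_zero]
    exact Algebra.FormallySmooth.of_split f (Ideal.Quotient.liftₐ I φ hφI) hg
  · -- FinitePresentation
    have hfg : I.FG := ⟨{dlPoly q h K}, by simp [hI]⟩
    exact Algebra.FinitePresentation.quotient hfg
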